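/- Let p be a prime, n a positive integer, and k a divisor of p^n − 1 such that k is even if p is odd. Then the generalised Paley graph GPaley(p^n, k) is arc-transitive: for any vertices x, y, x', y' with x adjacent to y and x' adjacent to y', there is an automorphism of GPaley(p^n, k) mapping x to x' and y to y'. -/

import Mathlib

/-- `k` is a primitive divisor of `p ^ n - 1`:  `k` divides `p ^ n - 1`
but `k` does not divide `p ^ a - 1` for any `1 ≤ a < n`. -/
def IsPrimitiveDivisor (p n k : ℕ) : Prop :=
  k ∣ p ^ n - 1 ∧ ∀ a : ℕ, 1 ≤ a → a < n → ¬ k ∣ p ^ a - 1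

/-- The generalised Paley graph `GPaley(p^n, k)`: vertices are the elements of
`GF(p^n)`, and distinct `x, y` are adjacent iff `x - y` is a `d`-th power in
`GF(p^n)^*`, where `d = (p^n - 1)/k`.  (Under the standing hypothesis that `k`
is even when `p` is odd, the underlying relation is symmetric, so taking the
symmetrised relation via `fromRel` yields exactly this graph.) -/
def gpaley (p : ℕ) [Fact p.Prime] (n k : ℕ) : SimpleGraph (GaloisField p n) :=
  SimpleGraph.fromRel fun x y =>
    ∃ z : GaloisField p n, z ≠ 0 ∧ z ^ ((p ^ n - 1) / k) = x - y

namespace GPaleyAux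

variable {F : Type*} [Field F]

/-- `w` is a `d`-th power up to sign. -/
def Q (d : ℕ) (w : F) : Prop :=
  (∃ z : F, z ≠ 0 ∧ z ^ d = w) ∨ (∃ z : F, z ≠ 0 ∧ z ^ d = -w)

lemma Q_ne_zero {d : ℕ} {w : F} (h : Q d w) : w ≠ 0 := by
  rintro rfl
  rcases h with ⟨z, hz, hzd⟩ | ⟨z, hz, hzd⟩ <;>
    exact hz (pow_eq_zero_iff'.mp (by simpa using hzd)).1

lemma Q_mul {d : ℕ} {a b : F} (ha : Q d a) (hb : Q d b) : Q d (a * b) := by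
  rcases ha with ⟨z, hz, hzd⟩ | ⟨z, hz, hzd⟩ <;>
    rcases hb with ⟨w, hw, hwd⟩ | ⟨w, hw, hwd⟩
  · exact Or.inl ⟨z * w, mul_ne_zero hz hw, by rw [mul_pow, hzd, hwd]⟩
  · exact Or.inr ⟨z * w, mul_ne_zero hz hw, by rw [mul_pow, hzd, hwd]; ring⟩
  · exact Or.inr ⟨z * w, mul_ne_zero hz hw, by rw [mul_pow, hzd, hwd]; ring⟩
  · exact Or.inl ⟨z * w, mul_ne_zero hz hw, by rw [mul_pow, hzd, hwd]; ring⟩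

lemma Q_inv {d : ℕ} {a : F} (ha : Q d a) : Q d a⁻¹ := by
  rcases ha with ⟨z, hz, hzd⟩ | ⟨z, hz, hzd⟩
  · exact Or.inl ⟨z⁻¹, inv_ne_zero hz, by rw [inv_pow, hzd]⟩
  · exact Or.inr ⟨z⁻¹, inv_ne_zero hz, by rw [inv_pow, hzd, neg_inv]⟩

lemma gpaley_adj_iff (p n k : ℕ) [Fact p.Prime] (x y : GaloisField p n) :
    (gpaley p n k).Adj x y ↔ Q ((p ^ n - 1) / k) (x - y) := by
  rw [gpaley, SimpleGraph.fromRel_adj]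
  constructor
  · rintro ⟨-, h | ⟨z, hz, he⟩⟩
    · exact Or.inl h
    · exact Or.inr ⟨z, hz, by rw [he]; ring⟩
  · intro h
    refine ⟨fun hxy => Q_ne_zero h (by rw [hxy, sub_self]), ?_⟩
    rcases h with h | ⟨z, hz, he⟩
    · exact Or.inl h
    · exact Or.inr ⟨z, hz, by rw [he]; ring⟩

end GPaleyAux

open GPaleyAux in
/-- For `k ∣ p^n - 1` (with `k` even if `p` is odd), the
generalised Paley graph `GPaley(p^n, k)` is arc-transitive: any arc can be
mapped to any other arc by an automorphism. -/
theorem gpaley_arcTransitive (p n k : ℕ) [Fact p.Prime] (hn : 0 < n)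
    (hk : k ∣ p ^ n - 1) (heven : Odd p → Even k) :
    ∀ x y x' y' : GaloisField p n,
      (gpaley p n k).Adj x y → (gpaley p n k).Adj x' y' →
        ∃ f : gpaley p n k ≃g gpaley p n k, f x = x' ∧ f y = y' := by
  intro x y x' y' hxy hxy'
  rw [gpaley_adj_iff] at hxy hxy'
  set d := (p ^ n - 1) / k with hd
  set a : GaloisField p n := (x' - y') * (x - y)⁻¹ with haa
  have ha : Q d a := Q_mul hxy' (Q_inv hxy)
  have ha0 : a ≠ 0 := Q_ne_zero ha
  have hne : x - y ≠ 0 := Q_ne_zero hxy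
  let e : GaloisField p n ≃ GaloisField p n :=
    { toFun := fun t => a * (t - x) + x'
      invFun := fun t => a⁻¹ * (t - x') + x
      left_inv := fun t => by field_simp; ring
      right_inv := fun t => by field_simp; ring }
  have hsub : ∀ u v : GaloisField p n, e u - e v = a * (u - v) := fun u v => by
    show (a * (u - x) + x') - (a * (v - x) + x') = a * (u - v); ring
  refine ⟨⟨e, ?_⟩, ?_, ?_⟩
  · intro u v
    rw [gpaley_adj_iff, gpaley_adj_iff, hsub]
    constructor
    · intro h
      have := Q_mul (Q_inv ha) h
      rwa [show a⁻¹ * (a * (u - v)) = u - v by field_simp] at this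
    · exact fun h => Q_mul ha h
  · show a * (x - x) + x' = x'; ring
  · show a * (y - x) + x' = y'
    rw [haa]
    field_simp
    ring
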